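/- For m ≥ 1 and v = Σ_{i=0}^m a_i v_i, define the 2×m matrix X(v) with rows (binom(m-1,m-1)a_{m-1}, −binom(m-1,m-2)a_{m-2}, ..., binom(m-1,0)a_0) and (binom(m-1,m-1)a_m, −binom(m-1,m-2)a_{m-1}, ..., binom(m-1,0)a_1), and the m×2 matrix Y(v) whose transpose has rows (a_1, a_2, ..., a_m) and (−a_0, −a_1, ..., −a_{m-1}). Then X(v_i)Y(v_j) − X(v_j)Y(v_i) = (−1)^i·binom(m,i)·I_2 if i + j = m, and equals 0 otherwise. -/
import Mathlib


open Matrix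

variable (F : Type*) [Field F] [CharZero F]

/-- The `2 × m` matrix `X(v)` for `v = Σ a_i v_i`, with rows
`(C(m-1,m-1)a_{m-1}, -C(m-1,m-2)a_{m-2}, ..., C(m-1,0)a_0)` and
`(C(m-1,m-1)a_m, -C(m-1,m-2)a_{m-1}, ..., C(m-1,0)a_1)`. -/
def X10 (m : ℕ) (hm : 1 ≤ m) (a : Fin (m + 1) → F) : Matrix (Fin 2) (Fin m) F :=
  Matrix.of fun r k =>
    if r = 0 then
      (-1 : F) ^ (k : ℕ) * ((m - 1).choose (m - 1 - (k : ℕ))) *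
        a ⟨m - 1 - (k : ℕ), by omega⟩
    else
      (-1 : F) ^ (k : ℕ) * ((m - 1).choose (m - 1 - (k : ℕ))) *
        a ⟨m - (k : ℕ), by omega⟩

/-- The `m × 2` matrix `Y(v)` for `v = Σ a_i v_i`, whose transpose has rows
`(a_1, a_2, ..., a_m)` and `(-a_0, -a_1, ..., -a_{m-1})`. -/
def Y10 (m : ℕ) (hm : 1 ≤ m) (a : Fin (m + 1) → F) : Matrix (Fin m) (Fin 2) F :=
  Matrix.of fun k c =>
    if c = 0 then a ⟨(k : ℕ) + 1, by omega⟩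
    else - a ⟨(k : ℕ), by omega⟩

lemma sum_ite_unique {α : Type*} [Fintype α] [DecidableEq α] (f : α → F) (P : α → Prop)
    [DecidablePred P] (k0 : α) (h : ∀ k, P k ↔ k = k0) :
    ∑ k, (if P k then f k else 0) = f k0 := by simp [h]

lemma sum_ite_none {α : Type*} [Fintype α] (f : α → F) (P : α → Prop)
    [DecidablePred P] (h : ∀ k, ¬ P k) :
    ∑ k, (if P k then f k else 0) = 0 := by simp [h]

lemma negpow (a b : ℕ) (h : a % 2 = b % 2) : (-1:F)^a = (-1:F)^b := by
  rw [neg_one_pow_eq_pow_mod_two, h, ← neg_one_pow_eq_pow_mod_two]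

lemma chooseP (m i : ℕ) (h1 : 1 ≤ i) (h2 : i ≤ m) :
    (m-1).choose (i-1) + (m-1).choose i = m.choose i := by
  obtain ⟨i', rfl⟩ : ∃ i', i = i'+1 := ⟨i-1, by omega⟩
  obtain ⟨m', rfl⟩ : ∃ m', m = m'+1 := ⟨m-1, by omega⟩
  simp [Nat.choose_succ_succ]

lemma E00 (m : ℕ) (hm1 : 1 ≤ m) (i j : Fin (m+1)) :
    (X10 F m hm1 (Pi.single i 1) * Y10 F m hm1 (Pi.single j 1)) 0 0 =
    if (i:ℕ) + (j:ℕ) = m ∧ 1 ≤ (j:ℕ) then (-1:F)^((j:ℕ)-1) * ((m-1).choose (i:ℕ)) else 0 := by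
  rw [Matrix.mul_apply]
  have h1 : ∀ k : Fin m,
      X10 F m hm1 (Pi.single i 1) 0 k * Y10 F m hm1 (Pi.single j 1) k 0 =
      if (m - 1 - (k:ℕ) = (i:ℕ) ∧ (k:ℕ) + 1 = (j:ℕ)) then
        (-1:F)^(k:ℕ) * ((m-1).choose (m-1-(k:ℕ))) else 0 := by
    intro k
    simp only [X10, Y10, Matrix.of_apply, if_pos rfl, Pi.single_apply, Fin.ext_iff]
    split_ifs <;> simp_all <;> omega
  simp only [h1]
  by_cases h : (i:ℕ) + (j:ℕ) = m ∧ 1 ≤ (j:ℕ)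
  · obtain ⟨hij, hj1⟩ := h
    rw [if_pos ⟨hij, hj1⟩, sum_ite_unique F _ _ ⟨(j:ℕ)-1, by omega⟩ ?_]
    · have hi : m - 1 - ((j:ℕ)-1) = (i:ℕ) := by omega
      simp [hi]
    · intro k
      have := k.isLt
      rw [Fin.ext_iff]
      constructor
      · rintro ⟨h1, h2⟩; simp; omega
      · intro hk; simp at hk; omega
  · rw [if_neg h, sum_ite_none]
    rintro k ⟨h1, h2⟩
    have := k.isLt
    exact h ⟨by omega, by omega⟩

lemma E01 (m : ℕ) (hm1 : 1 ≤ m) (i j : Fin (m+1)) :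
    (X10 F m hm1 (Pi.single i 1) * Y10 F m hm1 (Pi.single j 1)) 0 1 =
    if (i:ℕ) + (j:ℕ) + 1 = m then -((-1:F)^(j:ℕ) * ((m-1).choose (i:ℕ))) else 0 := by
  rw [Matrix.mul_apply]
  have h1 : ∀ k : Fin m,
      X10 F m hm1 (Pi.single i 1) 0 k * Y10 F m hm1 (Pi.single j 1) k 1 =
      if (m - 1 - (k:ℕ) = (i:ℕ) ∧ (k:ℕ) = (j:ℕ)) then
        -((-1:F)^(k:ℕ) * ((m-1).choose (m-1-(k:ℕ)))) else 0 := by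
    intro k
    simp only [X10, Y10, Matrix.of_apply, if_pos rfl,
      if_neg (show ¬(1:Fin 2) = 0 by decide), Pi.single_apply, Fin.ext_iff]
    split_ifs <;> simp_all <;> omega
  simp only [h1]
  by_cases h : (i:ℕ) + (j:ℕ) + 1 = m
  · rw [if_pos h, sum_ite_unique F _ _ ⟨(j:ℕ), by omega⟩ ?_]
    · have hi : m - 1 - (j:ℕ) = (i:ℕ) := by omega
      simp [hi]
    · intro k
      have := k.isLt
      rw [Fin.ext_iff]
      constructor
      · rintro ⟨h1, h2⟩; simp; omega
      · intro hk; simp at hk; omega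
  · rw [if_neg h, sum_ite_none]
    rintro k ⟨h1, h2⟩
    have := k.isLt
    omega

lemma E10 (m : ℕ) (hm1 : 1 ≤ m) (i j : Fin (m+1)) :
    (X10 F m hm1 (Pi.single i 1) * Y10 F m hm1 (Pi.single j 1)) 1 0 =
    if (i:ℕ) + (j:ℕ) = m + 1 then (-1:F)^((j:ℕ)-1) * ((m-1).choose ((i:ℕ)-1)) else 0 := by
  rw [Matrix.mul_apply]
  have h1 : ∀ k : Fin m,
      X10 F m hm1 (Pi.single i 1) 1 k * Y10 F m hm1 (Pi.single j 1) k 0 =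
      if (m - (k:ℕ) = (i:ℕ) ∧ (k:ℕ) + 1 = (j:ℕ)) then
        (-1:F)^(k:ℕ) * ((m-1).choose (m-1-(k:ℕ))) else 0 := by
    intro k
    simp only [X10, Y10, Matrix.of_apply, if_pos rfl,
      if_neg (show ¬(1:Fin 2) = 0 by decide), Pi.single_apply, Fin.ext_iff]
    split_ifs <;> simp_all <;> omega
  simp only [h1]
  by_cases h : (i:ℕ) + (j:ℕ) = m + 1
  · have hi := i.isLt
    have hj := j.isLt
    rw [if_pos h, sum_ite_unique F _ _ ⟨(j:ℕ)-1, by omega⟩ ?_]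
    · have hi2 : m - 1 - ((j:ℕ)-1) = (i:ℕ) - 1 := by omega
      simp [hi2]
    · intro k
      have := k.isLt
      rw [Fin.ext_iff]
      constructor
      · rintro ⟨h1, h2⟩; simp; omega
      · intro hk; simp at hk; omega
  · rw [if_neg h, sum_ite_none]
    rintro k ⟨h1, h2⟩
    have := k.isLt
    omega

lemma E11 (m : ℕ) (hm1 : 1 ≤ m) (i j : Fin (m+1)) :
    (X10 F m hm1 (Pi.single i 1) * Y10 F m hm1 (Pi.single j 1)) 1 1 =
    if (i:ℕ) + (j:ℕ) = m ∧ 1 ≤ (i:ℕ) then -((-1:F)^(j:ℕ) * ((m-1).choose ((i:ℕ)-1))) else 0 := by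
  rw [Matrix.mul_apply]
  have h1 : ∀ k : Fin m,
      X10 F m hm1 (Pi.single i 1) 1 k * Y10 F m hm1 (Pi.single j 1) k 1 =
      if (m - (k:ℕ) = (i:ℕ) ∧ (k:ℕ) = (j:ℕ)) then
        -((-1:F)^(k:ℕ) * ((m-1).choose (m-1-(k:ℕ)))) else 0 := by
    intro k
    simp only [X10, Y10, Matrix.of_apply,
      if_neg (show ¬(1:Fin 2) = 0 by decide), Pi.single_apply, Fin.ext_iff]
    split_ifs <;> simp_all <;> omega
  simp only [h1]
  by_cases h : (i:ℕ) + (j:ℕ) = m ∧ 1 ≤ (i:ℕ)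
  · obtain ⟨hij, hi1⟩ := h
    rw [if_pos ⟨hij, hi1⟩, sum_ite_unique F _ _ ⟨(j:ℕ), by omega⟩ ?_]
    · have hi2 : m - 1 - (j:ℕ) = (i:ℕ) - 1 := by omega
      simp [hi2]
    · intro k
      have := k.isLt
      rw [Fin.ext_iff]
      constructor
      · rintro ⟨h1, h2⟩; simp; omega
      · intro hk; simp at hk; omega
  · rw [if_neg h, sum_ite_none]
    rintro k ⟨h1, h2⟩
    have := k.isLt
    exact h ⟨by omega, by omega⟩

/-- Verification of relation (funca) for the uniserial representation with socle
factors `V(1), V(m-1), V(1)` (`m = 2n - 1 ≥ 1`):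
`X(v_i)Y(v_j) - X(v_j)Y(v_i) = (-1)^i C(m,i) I₂` if `i + j = m`, else `0`. -/
theorem stmt_10 (n m : ℕ) (hn : 1 ≤ n) (hm : m = 2 * n - 1) (hm1 : 1 ≤ m)
    (i j : Fin (m + 1)) :
    X10 F m hm1 (Pi.single i 1) * Y10 F m hm1 (Pi.single j 1)
      - X10 F m hm1 (Pi.single j 1) * Y10 F m hm1 (Pi.single i 1) =
    if (i : ℕ) + (j : ℕ) = m
      then ((-1 : F) ^ (i : ℕ) * (m.choose (i : ℕ))) •
        (1 : Matrix (Fin 2) (Fin 2) F)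
      else 0 := by
  have hio := i.isLt
  have hjo := j.isLt
  have hm2 : m % 2 = 1 := by omega
  ext r c
  fin_cases r <;> fin_cases c <;>
    simp only [Fin.zero_eta, Fin.mk_one, Matrix.sub_apply]
  · -- (0,0)
    rw [E00, E00, apply_ite (fun M : Matrix (Fin 2) (Fin 2) F => M 0 0)]
    simp only [Matrix.smul_apply, Matrix.one_apply_eq, smul_eq_mul, mul_one,
      Matrix.zero_apply]
    by_cases hij : (i:ℕ) + (j:ℕ) = m
    · rw [if_pos hij]
      by_cases hj1 : 1 ≤ (j:ℕ)
      · by_cases hi1 : 1 ≤ (i:ℕ)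
        · rw [if_pos ⟨hij, hj1⟩, if_pos ⟨by omega, hi1⟩]
          rw [negpow F ((j:ℕ)-1) (i:ℕ) (by omega),
            show (j:ℕ) = (m-1) - ((i:ℕ)-1) by omega,
            Nat.choose_symm (by omega : (i:ℕ)-1 ≤ m-1),
            negpow F ((i:ℕ)-1) ((i:ℕ)+1) (by omega),
            ← chooseP m (i:ℕ) hi1 (by omega)]
          push_cast [pow_succ]
          ring
        · rw [if_pos ⟨hij, hj1⟩, if_neg (by omega)]
          have e1 : (-1:F)^((j:ℕ)-1) = 1 := by
            rw [negpow F _ 0 (by omega), pow_zero]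
          simp [show (i:ℕ) = 0 by omega, e1, show (j:ℕ) = m by omega]
          rw [negpow F (m-1) 0 (by omega), pow_zero]
      · rw [if_neg (by omega), if_pos ⟨by omega, by omega⟩]
        have e1 : (-1:F)^((i:ℕ)-1) = 1 := by
          rw [negpow F _ 0 (by omega), pow_zero]
        have e2 : (-1:F)^(i:ℕ) = -1 := by
          rw [negpow F _ 1 (by omega), pow_one]
        simp [show (j:ℕ) = 0 by omega, show (i:ℕ) = m by omega, e1, e2]
        rw [negpow F (m-1) 0 (by omega), negpow F m 1 (by omega)]
        norm_num
    · rw [if_neg hij, if_neg (by omega), if_neg (by omega), sub_zero]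
  · -- (0,1)
    rw [E01, E01, apply_ite (fun M : Matrix (Fin 2) (Fin 2) F => M 0 1)]
    simp only [Matrix.smul_apply, Matrix.one_apply_ne (by decide : (0:Fin 2) ≠ 1),
      smul_eq_mul, mul_zero, Matrix.zero_apply, ite_self]
    by_cases h : (i:ℕ) + (j:ℕ) + 1 = m
    · rw [if_pos h, if_pos (by omega)]
      rw [negpow F (j:ℕ) (i:ℕ) (by omega),
        show (j:ℕ) = (m-1) - (i:ℕ) by omega,
        Nat.choose_symm (by omega : (i:ℕ) ≤ m-1)]
      ring
    · rw [if_neg h, if_neg (by omega), sub_zero]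
  · -- (1,0)
    rw [E10, E10, apply_ite (fun M : Matrix (Fin 2) (Fin 2) F => M 1 0)]
    simp only [Matrix.smul_apply, Matrix.one_apply_ne (by decide : (1:Fin 2) ≠ 0),
      smul_eq_mul, mul_zero, Matrix.zero_apply, ite_self]
    by_cases h : (i:ℕ) + (j:ℕ) = m + 1
    · rw [if_pos h, if_pos (by omega)]
      rw [negpow F ((j:ℕ)-1) ((i:ℕ)-1) (by omega),
        show (j:ℕ)-1 = (m-1) - ((i:ℕ)-1) by omega,
        Nat.choose_symm (by omega : (i:ℕ)-1 ≤ m-1)]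
      ring
    · rw [if_neg h, if_neg (by omega), sub_zero]
  · -- (1,1)
    rw [E11, E11, apply_ite (fun M : Matrix (Fin 2) (Fin 2) F => M 1 1)]
    simp only [Matrix.smul_apply, Matrix.one_apply_eq, smul_eq_mul, mul_one,
      Matrix.zero_apply]
    by_cases hij : (i:ℕ) + (j:ℕ) = m
    · rw [if_pos hij]
      by_cases hi1 : 1 ≤ (i:ℕ)
      · by_cases hj1 : 1 ≤ (j:ℕ)
        · rw [if_pos ⟨hij, hi1⟩, if_pos ⟨by omega, hj1⟩]
          rw [negpow F (j:ℕ) ((i:ℕ)+1) (by omega),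
            show (j:ℕ)-1 = (m-1) - (i:ℕ) by omega,
            Nat.choose_symm (by omega : (i:ℕ) ≤ m-1),
            negpow F ((i:ℕ)) ((i:ℕ)) rfl,
            ← chooseP m (i:ℕ) hi1 (by omega)]
          push_cast [pow_succ]
          ring
        · rw [if_pos ⟨hij, hi1⟩, if_neg (by omega)]
          have e2 : (-1:F)^(j:ℕ) = 1 := by
            rw [negpow F _ 0 (by omega), pow_zero]
          have e3 : (-1:F)^(i:ℕ) = -1 := by
            rw [negpow F _ 1 (by omega), pow_one]
          simp [show (i:ℕ) = m by omega, e2, e3]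
          rw [negpow F m 1 (by omega)]
          norm_num
      · rw [if_neg (by omega), if_pos ⟨by omega, by omega⟩]
        have e2 : (-1:F)^(i:ℕ) = 1 := by
          rw [negpow F _ 0 (by omega), pow_zero]
        simp [show (i:ℕ) = 0 by omega, show (j:ℕ) = m by omega, e2]
    · rw [if_neg hij, if_neg (by omega), if_neg (by omega), sub_zero]
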